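/- For 0 ≤ θ ≤ π/2, the limit as N → ∞ of trace(A_N(θ)²)/N equals -(π²/3 + θ² - πθ). -/

import Mathlib

open Matrix Finset Real Filter

/-- summand: cos(kθ)²/k² (equals 0 at k = 0). -/
noncomputable def ccc (θ : ℝ) (k : ℕ) : ℝ := Real.cos (k * θ) ^ 2 / (k : ℝ) ^ 2

lemma bernoulli_two_eval (x : ℝ) :
    (Polynomial.aeval x) (Polynomial.bernoulli 2) = x ^ 2 - x + 1 / 6 := by
  simp_rw [Polynomial.bernoulli, map_sum, Finset.sum_range_succ, Polynomial.aeval_monomial]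
  rw [Finset.sum_range_zero, zero_add, bernoulli_one,
    bernoulli_eq_bernoulli'_of_ne_one zero_ne_one, bernoulli'_zero,
    bernoulli_eq_bernoulli'_of_ne_one (by decide : 2 ≠ 1), bernoulli'_two]
  push_cast
  norm_num
  ring

lemma hasSum_ccc (θ : ℝ) (hθ0 : 0 ≤ θ) (hθ1 : θ ≤ π / 2) :
    HasSum (ccc θ) (π ^ 2 / 6 + θ ^ 2 / 2 - π * θ / 2) := by
  have hπ : (0:ℝ) < π := Real.pi_pos
  have hx : θ / π ∈ Set.Icc (0:ℝ) 1 := by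
    constructor
    · positivity
    · rw [div_le_one hπ]; linarith
  have h1 := hasSum_one_div_nat_pow_mul_cos one_ne_zero hx
  norm_num [Nat.factorial] at h1
  rw [bernoulli_two_eval] at h1
  have h2 := hasSum_zeta_two
  have h3 := (h2.add h1).div_const 2
  convert h3 using 1
  · rfl
  · funext k
    have hcos : Real.cos (2 * π * k * (θ / π)) = Real.cos (2 * (k * θ)) := by
      congr 1
      field_simp
    rw [hcos]
    rw [ccc, Real.cos_sq]
    rcases Nat.eq_zero_or_pos k with hk | hk
    · subst hk; norm_num
    · have hkR : (k:ℝ) ≠ 0 := Nat.cast_ne_zero.mpr hk.ne'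
      field_simp
  · field_simp
    ring

/-- partial sums starting from k = 1 -/
noncomputable def ppp (θ : ℝ) (j : ℕ) : ℝ := ∑ k ∈ Finset.range j, ccc θ (k + 1)

lemma fin_double_sum (N : ℕ) (g : ℕ → ℕ → ℝ) :
    ∑ m : Fin N, ∑ n : Fin N, g m n = ∑ m ∈ Finset.range N, ∑ n ∈ Finset.range N, g m n := by
  rw [← Fin.sum_univ_eq_sum_range (fun m => ∑ n ∈ Finset.range N, g m n) N]
  exact Finset.sum_congr rfl fun m _ => Fin.sum_univ_eq_sum_range (fun n => g m n) N

lemma sum_q_eq (θ : ℝ) (N : ℕ) :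
    ∑ m ∈ Finset.range N, ∑ n ∈ Finset.range N,
      Real.cos (((m:ℝ) - (n:ℝ)) * θ) ^ 2 / ((m:ℝ) - (n:ℝ)) ^ 2
    = 2 * ∑ j ∈ Finset.range N, ppp θ j := by
  induction N with
  | zero => simp
  | succ N ih =>
    have hsym : ∀ m n : ℕ, Real.cos (((m:ℝ)-(n:ℝ))*θ)^2 / ((m:ℝ)-(n:ℝ))^2
        = Real.cos (((n:ℝ)-(m:ℝ))*θ)^2 / ((n:ℝ)-(m:ℝ))^2 := by
      intro m n
      have h1 : ((n:ℝ)-(m:ℝ)) = -((m:ℝ)-(n:ℝ)) := by ring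
      rw [h1, neg_mul, Real.cos_neg, neg_sq]
    have hrow : ∑ n ∈ Finset.range N,
        Real.cos ((((N:ℕ):ℝ)-(n:ℝ))*θ)^2 / (((N:ℕ):ℝ)-(n:ℝ))^2 = ppp θ N := by
      rw [ppp, ← Finset.sum_range_reflect (fun k => ccc θ (k+1)) N]
      apply Finset.sum_congr rfl
      intro n hn
      rw [Finset.mem_range] at hn
      have h1 : ((N:ℝ) - (n:ℝ)) = ((N - n : ℕ) : ℝ) := by
        rw [Nat.cast_sub hn.le]
      have h2 : N - 1 - n + 1 = N - n := by omega
      rw [h1, h2, ccc]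
    have hdiag : Real.cos ((((N:ℕ):ℝ)-((N:ℕ):ℝ))*θ)^2 / (((N:ℕ):ℝ)-((N:ℕ):ℝ))^2 = 0 := by
      simp
    rw [Finset.sum_range_succ]
    simp_rw [Finset.sum_range_succ
      (fun n => Real.cos (((_:ℝ)-(n:ℝ))*θ)^2 / ((_:ℝ)-(n:ℝ))^2)]
    rw [Finset.sum_add_distrib, ih, hdiag, hrow]
    have hcol : ∑ m ∈ Finset.range N,
        Real.cos (((m:ℝ)-((N:ℕ):ℝ))*θ)^2 / ((m:ℝ)-((N:ℕ):ℝ))^2 = ppp θ N := by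
      rw [← hrow]
      exact Finset.sum_congr rfl fun m _ => hsym m N
    rw [hcol, Finset.sum_range_succ (fun j => ppp θ j)]
    ring

theorem tendsto_trace_sq_oscillatory_A (θ : ℝ) (hθ0 : 0 ≤ θ) (hθ1 : θ ≤ π / 2)
    (A : (N : ℕ) → Matrix (Fin N) (Fin N) ℝ)
    (hA : ∀ (N : ℕ) (m n : Fin N), A N m n =
      if m = n then 0 else Real.cos (((m : ℝ) - (n : ℝ)) * θ) / ((m : ℝ) - (n : ℝ))) :
    Filter.Tendsto (fun N : ℕ => Matrix.trace (A N * A N) / (N : ℝ)) Filter.atTop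
      (nhds (-(π ^ 2 / 3 + θ ^ 2 - π * θ))) := by
  have htr : ∀ N, Matrix.trace (A N * A N)
      = -(2 * ∑ j ∈ Finset.range N, ppp θ j) := by
    intro N
    rw [← sum_q_eq θ N]
    have hterm : ∀ m n : Fin N, A N m n * A N n m
        = -(Real.cos ((((m:ℕ):ℝ)-((n:ℕ):ℝ))*θ)^2 / (((m:ℕ):ℝ)-((n:ℕ):ℝ))^2) := by
      intro m n
      rw [hA, hA]
      rcases eq_or_ne m n with h | h
      · subst h; simp
      · rw [if_neg h, if_neg h.symm]
        have hd : ((m:ℝ) - (n:ℝ)) ≠ 0 := by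
          have : ((m:ℕ):ℝ) ≠ ((n:ℕ):ℝ) := by
            exact_mod_cast fun hmn => h (Fin.ext (Nat.cast_injective hmn))
          intro hc; apply this; linarith [sub_eq_zero.mp hc]
        have h2 : ((n:ℝ) - (m:ℝ)) = -((m:ℝ) - (n:ℝ)) := by ring
        rw [h2, neg_mul, Real.cos_neg, div_mul_div_comm, ← sq, mul_neg, ← sq, div_neg]
    have : Matrix.trace (A N * A N) = ∑ m : Fin N, ∑ n : Fin N, A N m n * A N n m := by
      simp [Matrix.trace, Matrix.mul_apply]
    rw [this]
    simp_rw [hterm]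
    rw [fin_double_sum N (fun m n => -(Real.cos (((m:ℝ)-(n:ℝ))*θ)^2 / ((m:ℝ)-(n:ℝ))^2))]
    simp [Finset.sum_neg_distrib]
  have hS := hasSum_ccc θ hθ0 hθ1
  have h0 : ∑ i ∈ Finset.range 1, ccc θ i = 0 := by simp [ccc]
  have hs1 : HasSum (fun k => ccc θ (k+1)) (π ^ 2 / 6 + θ ^ 2 / 2 - π * θ / 2) := by
    rw [hasSum_nat_add_iff 1, h0, add_zero]
    exact hS
  have hP : Tendsto (ppp θ) atTop (nhds (π ^ 2 / 6 + θ ^ 2 / 2 - π * θ / 2)) :=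
    hs1.tendsto_sum_nat
  have hC := hP.cesaro
  have hC2 := hC.const_mul (-2 : ℝ)
  have heq : (fun N : ℕ => Matrix.trace (A N * A N) / (N : ℝ))
      = fun N : ℕ => -2 * ((N:ℝ)⁻¹ * ∑ j ∈ Finset.range N, ppp θ j) := by
    funext N
    rw [htr N, div_eq_mul_inv]
    ring
  rw [heq]
  convert hC2 using 2
  ring
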